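/- Let (Ω, 𝔽, P) be a probability space and let {M(x) : x ∈ ℝ} be a family of real random variables such that M(x) ∈ L²(P) for every x ∈ ℝ. Suppose there exist measurable K : Ω → [0, ∞) with E[K²] < ∞ and measurable δ : Ω → (0, ∞) such that for P-almost every ω, the map x ↦ M(x, ω) is continuously differentiable with derivative M′(x, ω) satisfying |M′(x, ω) − M′(y, ω)| ≤ K(ω)·|x − y|^{δ(ω)} for all x, y ∈ ℝ. Then for every x ∈ ℝ, the almost-sure derivative M′(x) belongs to L²(P) and the difference quotients converge in L²: lim_{h → 0} E[((M(x + h) − M(x))/h − M′(x))²] = 0. -/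

import Mathlib

open MeasureTheory Filter

/-- Dividing an a.e.-strongly-measurable real function by a constant. -/
lemma aesm_div_const {Ω : Type*} [MeasurableSpace Ω] {P : Measure Ω} {f : Ω → ℝ}
    (hf : AEStronglyMeasurable f P) (c : ℝ) :
    AEStronglyMeasurable (fun ω => f ω / c) P := by
  have h' : AEStronglyMeasurable (fun ω => f ω * c⁻¹) P :=
    hf.mul (aestronglyMeasurable_const (b := c⁻¹))
  simpa [div_eq_mul_inv] using h'

/-- Mean value theorem bound: for a `C¹` function whose derivative is `(k, d)`-Hölder,
the difference quotient at step `h` with `0 < |h| ≤ 1` differs from the derivative by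
at most `k`. -/
lemma mvt_holder_bound {f g : ℝ → ℝ} (hf : ∀ y : ℝ, HasDerivAt f (g y) y)
    {k d : ℝ} (hd : 0 < d)
    (hHol : ∀ a b : ℝ, |g a - g b| ≤ k * |a - b| ^ d)
    (x h : ℝ) (hh : h ≠ 0) (hh1 : |h| ≤ 1) :
    |(f (x + h) - f x) / h - g x| ≤ k := by
  have hk : 0 ≤ k := by
    have := hHol (1 : ℝ) 0
    have h1 : |(1 : ℝ) - 0| ^ d = 1 := by norm_num
    have := this.trans_eq (by rw [h1, mul_one])
    exact le_trans (abs_nonneg _) this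
  have key : ∀ a b : ℝ, a < b → ∃ c ∈ Set.Ioo a b, g c = (f b - f a) / (b - a) :=
    fun a b hab => exists_hasDerivAt_eq_slope f g hab
      (fun y _ => (hf y).continuousAt.continuousWithinAt)
      (fun y _ => hf y)
  have hbound : ∀ c : ℝ, |c - x| ≤ 1 → |g c - g x| ≤ k := by
    intro c hc
    calc |g c - g x| ≤ k * |c - x| ^ d := hHol c x
      _ ≤ k * 1 := by
          gcongr
          exact Real.rpow_le_one (abs_nonneg _) hc hd.le
      _ = k := mul_one k
  rcases hh.lt_or_gt with hneg | hpos
  · obtain ⟨c, hc, hgc⟩ := key (x + h) x (by linarith)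
    have hcx : |c - x| ≤ 1 := by
      rw [abs_le]; rw [abs_le] at hh1
      constructor <;> [nlinarith [hc.1, hc.2]; nlinarith [hc.1, hc.2]]
    have heq : (f (x + h) - f x) / h = g c := by
      rw [hgc]
      rw [show x - (x + h) = -h by ring, div_neg, ← neg_div, neg_sub]
    rw [heq]
    exact hbound c hcx
  · obtain ⟨c, hc, hgc⟩ := key x (x + h) (by linarith)
    have hcx : |c - x| ≤ 1 := by
      rw [abs_le]; rw [abs_le] at hh1
      constructor <;> [nlinarith [hc.1, hc.2]; nlinarith [hc.1, hc.2]]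
    have heq : (f (x + h) - f x) / h = g c := by
      rw [hgc]
      rw [show x + h - x = h by ring]
    rw [heq]
    exact hbound c hcx

/-- L²-differentiability of a family of random variables that is a.s. of class `C^{1,δ}(K)`
with `K ∈ L²(P)` and `δ > 0` (Theorem 4.3 of the paper): the a.s. derivative `M'(x)` is in
`L²(P)` and the difference quotients converge to it in `L²`. -/
theorem family_differentiable_in_L2
    {Ω : Type*} [MeasurableSpace Ω] (P : Measure Ω) [IsProbabilityMeasure P]
    (M M' : ℝ → Ω → ℝ) (hM : ∀ x : ℝ, MemLp (M x) 2 P)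
    (K δ : Ω → ℝ) (hKmeas : Measurable K) (hKnonneg : ∀ ω, 0 ≤ K ω)
    (hK2 : Integrable (fun ω => K ω ^ 2) P)
    (hδmeas : Measurable δ) (hδpos : ∀ ω, 0 < δ ω)
    (hreg : ∀ᵐ ω ∂P,
      (∀ x : ℝ, HasDerivAt (fun y => M y ω) (M' x ω) x) ∧
      Continuous (fun x => M' x ω) ∧
      ∀ x y : ℝ, |M' x ω - M' y ω| ≤ K ω * |x - y| ^ δ ω) :
    ∀ x : ℝ, MemLp (M' x) 2 P ∧
      Tendsto (fun h : ℝ => ∫ ω, ((M (x + h) ω - M x ω) / h - M' x ω) ^ 2 ∂P)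
        (nhdsWithin (0 : ℝ) {h : ℝ | h ≠ 0}) (nhds 0) := by
  intro x
  have hMsm : ∀ y : ℝ, AEStronglyMeasurable (M y) P := fun y => (hM y).1
  have hKL2 : MemLp K 2 P :=
    (memLp_two_iff_integrable_sq hKmeas.aestronglyMeasurable).mpr hK2
  -- a.e. bound on difference quotients
  have hbd : ∀ᵐ ω ∂P, ∀ h : ℝ, h ≠ 0 → |h| ≤ 1 →
      |(M (x + h) ω - M x ω) / h - M' x ω| ≤ K ω := by
    filter_upwards [hreg] with ω hω h hh hh1
    obtain ⟨hder, _, hHol⟩ := hω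
    exact mvt_holder_bound hder (hδpos ω) (fun a b => hHol a b) x h hh hh1
  -- a.e. strong measurability of M' x as a.e. limit of difference quotients
  have hM'sm : AEStronglyMeasurable (M' x) P := by
    apply aestronglyMeasurable_of_tendsto_ae (u := atTop)
      (f := fun (n : ℕ) (ω : Ω) => (M (x + 1 / (n + 1)) ω - M x ω) / (1 / (n + 1)))
    · intro n
      exact aesm_div_const ((hMsm _).sub (hMsm x)) _
    · filter_upwards [hreg] with ω hω
      obtain ⟨hder, _, _⟩ := hω
      have h1 := hasDerivAt_iff_tendsto_slope.mp (hder x)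
      have hseq : Tendsto (fun n : ℕ => x + 1 / (n + 1 : ℝ)) atTop (nhdsWithin x {x}ᶜ) := by
        apply tendsto_nhdsWithin_of_tendsto_nhds_of_eventually_within
        · have h0 : Tendsto (fun n : ℕ => 1 / (n + 1 : ℝ)) atTop (nhds 0) :=
            tendsto_one_div_add_atTop_nhds_zero_nat
          simpa using tendsto_const_nhds.add h0
        · filter_upwards with n
          simp only [Set.mem_compl_iff, Set.mem_singleton_iff]
          have : (0 : ℝ) < 1 / (n + 1 : ℝ) := by positivity
          intro hcontra
          nlinarith
      have := h1.comp hseq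
      refine this.congr (fun n => ?_)
      simp only [Function.comp_apply, slope_def_field, add_sub_cancel_left]
  -- Memℒp of M' x
  have hM'mem : MemLp (M' x) 2 P := by
    have hg : MemLp (fun ω => |M (x + 1) ω - M x ω| + K ω) 2 P :=
      ((hM (x + 1)).sub (hM x)).abs.add hKL2
    refine MemLp.of_le hg hM'sm ?_
    filter_upwards [hbd] with ω hb
    have h1 := hb 1 one_ne_zero (by norm_num)
    simp only [div_one] at h1
    have habs : |M' x ω| ≤ |M (x + 1) ω - M x ω| + K ω := by
      have := abs_sub_abs_le_abs_sub (M' x ω) (M (x + 1) ω - M x ω)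
      have h2 : |M' x ω - (M (x + 1) ω - M x ω)| ≤ K ω := by
        rw [abs_sub_comm]; exact h1
      linarith [abs_nonneg (M (x + 1) ω - M x ω)]
    rw [Real.norm_eq_abs, Real.norm_eq_abs]
    refine habs.trans (le_abs_self _)
  refine ⟨hM'mem, ?_⟩
  -- dominated convergence
  have key : Tendsto (fun h : ℝ => ∫ ω, ((M (x + h) ω - M x ω) / h - M' x ω) ^ 2 ∂P)
      (nhdsWithin (0 : ℝ) {h : ℝ | h ≠ 0}) (nhds (∫ _ω, (0 : ℝ) ∂P)) := by
    apply tendsto_integral_filter_of_dominated_convergence (fun ω => K ω ^ 2)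
    · filter_upwards with h
      have hsm : AEStronglyMeasurable (fun ω => (M (x + h) ω - M x ω) / h - M' x ω) P :=
        (aesm_div_const ((hMsm _).sub (hMsm x)) h).sub hM'sm
      have : (fun ω => ((M (x + h) ω - M x ω) / h - M' x ω) ^ 2)
          = fun ω => ((M (x + h) ω - M x ω) / h - M' x ω)
            * ((M (x + h) ω - M x ω) / h - M' x ω) := by
        funext ω; ring
      rw [this]
      exact hsm.mul hsm
    · have hev : ∀ᶠ h in nhdsWithin (0 : ℝ) {h : ℝ | h ≠ 0}, h ≠ 0 ∧ |h| ≤ 1 := by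
        have h1 : ∀ᶠ h in nhdsWithin (0 : ℝ) {h : ℝ | h ≠ 0}, h ≠ 0 :=
          eventually_mem_nhdsWithin
        have h2 : ∀ᶠ h in nhds (0 : ℝ), |h| ≤ 1 := by
          have : ∀ᶠ h in nhds (0 : ℝ), h ∈ Set.Ioo (-1 : ℝ) 1 :=
            Ioo_mem_nhds (by norm_num) (by norm_num)
          filter_upwards [this] with h hh
          rw [abs_le]; exact ⟨hh.1.le, hh.2.le⟩
        exact h1.and (h2.filter_mono nhdsWithin_le_nhds)
      filter_upwards [hev] with h hh
      filter_upwards [hbd] with ω hb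
      have h1 := hb h hh.1 hh.2
      rw [Real.norm_eq_abs, abs_of_nonneg (sq_nonneg _)]
      calc ((M (x + h) ω - M x ω) / h - M' x ω) ^ 2
          = |(M (x + h) ω - M x ω) / h - M' x ω| ^ 2 := (sq_abs _).symm
        _ ≤ K ω ^ 2 := by gcongr
    · exact hK2
    · filter_upwards [hreg] with ω hω
      obtain ⟨hder, _, _⟩ := hω
      have h1 := hasDerivAt_iff_tendsto_slope.mp (hder x)
      have hmap : Tendsto (fun h : ℝ => x + h) (nhdsWithin (0 : ℝ) {h : ℝ | h ≠ 0})
          (nhdsWithin x {x}ᶜ) := by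
        apply tendsto_nhdsWithin_of_tendsto_nhds_of_eventually_within
        · have : Tendsto (fun h : ℝ => x + h) (nhds 0) (nhds x) := by
            have h' : Tendsto (fun h : ℝ => x + h) (nhds 0) (nhds (x + 0)) :=
              (continuous_const.add continuous_id).tendsto (0 : ℝ)
            simpa using h'
          exact this.mono_left nhdsWithin_le_nhds
        · filter_upwards [eventually_mem_nhdsWithin] with h hh
          simp only [Set.mem_compl_iff, Set.mem_singleton_iff]
          intro hcontra
          exact hh (by linarith)
      have h2 : Tendsto (fun h : ℝ => (M (x + h) ω - M x ω) / h)
          (nhdsWithin (0 : ℝ) {h : ℝ | h ≠ 0}) (nhds (M' x ω)) := by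
        have := h1.comp hmap
        refine this.congr (fun h => ?_)
        simp only [Function.comp_apply, slope_def_field, add_sub_cancel_left]
      have h3 := h2.sub (tendsto_const_nhds (x := M' x ω))
      rw [sub_self] at h3
      have h4 := h3.pow 2
      simpa using h4
  simpa using key
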